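/- Let K be a real symmetric positive definite matrix given in block form K = fromBlocks K_ii K_ib K_bi K_bb (interior indices i, boundary indices b, with K_bi = K_ibᵀ), and let Q be a symmetric positive semidefinite matrix on the boundary indices. Let t denote the restriction to the boundary block, so that tᵀQt = fromBlocks 0 0 0 Q. Then K + tᵀQt is invertible, the tangent Schur complement S := K_bb − K_bi · K_ii⁻¹ · K_ib satisfies that S + Q is invertible, and the boundary block of the inverse satisfies t (K + tᵀQt)⁻¹ tᵀ = (S + Q)⁻¹. -/

import Mathlib

open Matrix

private lemma posDef_toBlocks₁₁ {ι β : Type*} [Fintype ι] [Fintype β]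
    {A : Matrix ι ι ℝ} {B : Matrix ι β ℝ} {C : Matrix β ι ℝ} {D : Matrix β β ℝ}
    (h : (fromBlocks A B C D).PosDef) : A.PosDef := by
  rw [posDef_iff_dotProduct_mulVec]
  constructor
  · have h1 := h.1
    rw [Matrix.IsHermitian] at h1 ⊢
    ext i j
    have := congrFun (congrFun h1 (Sum.inl i)) (Sum.inl j)
    simpa [Matrix.conjTranspose_apply, Matrix.fromBlocks] using this
  · intro x hx
    have hy : (Sum.elim x 0 : ι ⊕ β → ℝ) ≠ 0 := by
      intro h0
      apply hx
      ext i
      exact congrFun h0 (Sum.inl i)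
    have := h.dotProduct_mulVec_pos hy
    simpa [fromBlocks_mulVec, sumElim_dotProduct_sumElim] using this

private lemma posSemidef_fromBlocks_zero {ι β : Type*} [Fintype ι] [Fintype β]
    {Q : Matrix β β ℝ} (hQ : Q.PosSemidef) :
    (fromBlocks (0 : Matrix ι ι ℝ) 0 0 Q).PosSemidef := by
  rw [posSemidef_iff_dotProduct_mulVec]
  constructor
  · have h1 := hQ.1
    rw [Matrix.IsHermitian] at h1 ⊢
    ext i j
    cases i <;> cases j <;>
      simp [Matrix.conjTranspose_apply, Matrix.fromBlocks] <;>
      exact congrFun (congrFun h1 _) _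
  · intro x
    have hx : x = Sum.elim (x ∘ Sum.inl) (x ∘ Sum.inr) := by
      ext i; cases i <;> rfl
    have h2 := hQ.dotProduct_mulVec_nonneg (x ∘ Sum.inr)
    rw [hx, fromBlocks_mulVec]
    simp only [Matrix.zero_mulVec, Matrix.mulVec_zero, add_zero, zero_add, star_trivial,
      sumElim_dotProduct_sumElim, dotProduct_zero]
    simpa using h2

theorem stmt_0 {ι β : Type*} [Fintype ι] [Fintype β] [DecidableEq ι] [DecidableEq β]
    (Kii : Matrix ι ι ℝ) (Kib : Matrix ι β ℝ) (Kbi : Matrix β ι ℝ) (Kbb : Matrix β β ℝ)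
    (Q : Matrix β β ℝ)
    (hKbi : Kbi = Kibᵀ)
    (hK : (fromBlocks Kii Kib Kbi Kbb).PosDef)
    (hQsym : Qᵀ = Q)
    (hQ : Q.PosSemidef) :
    IsUnit (fromBlocks Kii Kib Kbi Kbb + fromBlocks 0 0 0 Q) ∧
    IsUnit (Kbb - Kbi * Kii⁻¹ * Kib + Q) ∧
    ((fromBlocks Kii Kib Kbi Kbb + fromBlocks 0 0 0 Q)⁻¹).toBlocks₂₂
      = (Kbb - Kbi * Kii⁻¹ * Kib + Q)⁻¹ := by
  have hsum : fromBlocks Kii Kib Kbi Kbb + fromBlocks 0 0 0 Q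
      = fromBlocks Kii Kib Kbi (Kbb + Q) := by
    rw [fromBlocks_add]; simp
  have hK' : (fromBlocks Kii Kib Kbi (Kbb + Q)).PosDef := by
    rw [← hsum]
    exact hK.add_posSemidef (posSemidef_fromBlocks_zero hQ)
  have hKii : Kii.PosDef := posDef_toBlocks₁₁ hK
  letI : Invertible Kii := hKii.isUnit.invertible
  letI iK' : Invertible (fromBlocks Kii Kib Kbi (Kbb + Q)) := hK'.isUnit.invertible
  letI iS : Invertible (Kbb + Q - Kbi * ⅟Kii * Kib) :=
    invertibleOfFromBlocks₁₁Invertible Kii Kib Kbi (Kbb + Q)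
  have hinvKii : (⅟Kii : Matrix ι ι ℝ) = Kii⁻¹ := invOf_eq_nonsing_inv Kii
  have hSeq : Kbb + Q - Kbi * ⅟Kii * Kib = Kbb - Kbi * Kii⁻¹ * Kib + Q := by
    rw [hinvKii]; abel
  rw [hsum]
  refine ⟨isUnit_of_invertible _, hSeq ▸ isUnit_of_invertible _, ?_⟩
  letI iS' : Invertible (Kbb - Kbi * Kii⁻¹ * Kib + Q) := iS.copy _ hSeq.symm
  have h1 : (fromBlocks Kii Kib Kbi (Kbb + Q))⁻¹ = ⅟(fromBlocks Kii Kib Kbi (Kbb + Q)) :=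
    (invOf_eq_nonsing_inv _).symm
  have h2 : (Kbb - Kbi * Kii⁻¹ * Kib + Q)⁻¹ = ⅟(Kbb - Kbi * Kii⁻¹ * Kib + Q) :=
    (invOf_eq_nonsing_inv _).symm
  rw [h1, h2, invOf_fromBlocks₁₁_eq]
  simp only [toBlocks_fromBlocks₂₂]
  congr 1
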